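/- Let M be a compact nowhere dense subset of ℝ² and ε > 0. Then there exists an ε-homeomorphism of ℝ² (a homeomorphism moving each point less than ε) taking M to a set M₁ such that the topological boundary of M₁ contains no vertical segment of length ≥ ε. -/

import Mathlib

set_option maxHeartbeats 1000000

open Set Function Topology Filter

/-- The plane. -/
abbrev Plane := EuclideanSpace ℝ (Fin 2)

section Aux

noncomputable def pt (x y : ℝ) : Plane :=
  x • EuclideanSpace.single (0 : Fin 2) (1:ℝ) + y • EuclideanSpace.single (1 : Fin 2) (1:ℝ)

@[simp] lemma pt_apply0 (x y : ℝ) : pt x y 0 = x := by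
  simp [pt, PiLp.add_apply, PiLp.smul_apply, EuclideanSpace.single_apply]

@[simp] lemma pt_apply1 (x y : ℝ) : pt x y 1 = y := by
  simp [pt, PiLp.add_apply, PiLp.smul_apply, EuclideanSpace.single_apply]

lemma pt_eta (z : Plane) : pt (z 0) (z 1) = z := by
  ext i
  fin_cases i <;> simp [pt, PiLp.add_apply, PiLp.smul_apply, EuclideanSpace.single_apply]

lemma continuous_pt : Continuous fun z : ℝ × ℝ => pt z.1 z.2 :=
  (continuous_fst.smul continuous_const).add (continuous_snd.smul continuous_const)

lemma continuous_coord (i : Fin 2) : Continuous fun z : Plane => z i :=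
  (EuclideanSpace.proj i : Plane →L[ℝ] ℝ).continuous

lemma abs_le_norm_pt (x y : ℝ) : |x| ≤ ‖pt x y‖ := by
  have h : ‖pt x y‖ = Real.sqrt (x^2 + y^2) := by
    rw [EuclideanSpace.norm_eq]
    congr 1
    rw [Fin.sum_univ_two]
    simp [sq_abs]
  rw [h, ← Real.sqrt_sq_eq_abs]
  exact Real.sqrt_le_sqrt (by nlinarith [sq_nonneg y])

noncomputable def E0 : Plane := EuclideanSpace.single (0 : Fin 2) (1:ℝ)

@[simp] lemma E0_apply1 : (E0 : Plane) 1 = 0 := by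
  simp [E0, EuclideanSpace.single_apply]

@[simp] lemma add_smul_E0_apply1 (p : Plane) (t : ℝ) : (p + t • E0) 1 = p 1 := by
  simp [E0, PiLp.add_apply, PiLp.smul_apply, EuclideanSpace.single_apply]

@[simp] lemma sub_smul_E0_apply1 (p : Plane) (t : ℝ) : (p - t • E0) 1 = p 1 := by
  simp [E0, PiLp.sub_apply, PiLp.smul_apply, EuclideanSpace.single_apply]

noncomputable def shear (f : BoundedContinuousFunction ℝ ℝ) : Plane ≃ₜ Plane where
  toFun p := p + (f (p 1)) • E0
  invFun p := p - (f (p 1)) • E0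
  left_inv p := by simp
  right_inv p := by simp
  continuous_toFun := by
    refine continuous_id.add (Continuous.fun_smul ?_ continuous_const)
    exact f.continuous.comp (EuclideanSpace.proj (1 : Fin 2) : Plane →L[ℝ] ℝ).continuous
  continuous_invFun := by
    refine continuous_id.sub (Continuous.fun_smul ?_ continuous_const)
    exact f.continuous.comp (EuclideanSpace.proj (1 : Fin 2) : Plane →L[ℝ] ℝ).continuous

lemma dist_shear (f : BoundedContinuousFunction ℝ ℝ) (p : Plane) :
    dist (shear f p) p = |f (p 1)| := by
  rw [dist_eq_norm]
  show ‖p + (f (p 1)) • E0 - p‖ = _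
  rw [add_sub_cancel_left, norm_smul, E0, EuclideanSpace.norm_single]
  simp

lemma shear_symm_pt (f : BoundedContinuousFunction ℝ ℝ) (a y : ℝ) :
    (shear f).symm (pt a y) = pt (a - f y) y := by
  show pt a y - (f ((pt a y) 1)) • E0 = _
  rw [pt_apply1]
  unfold pt E0
  module

def Bad (M : Set Plane) (c d : ℝ) : Set (BoundedContinuousFunction ℝ ℝ) :=
  {f | ∃ a : ℝ, ∀ y ∈ Icc c d, pt (a - f y) y ∈ M}

def Yset (M : Set Plane) (r : ℚ × ℚ) : Set ℝ :=
  {y | r.1 < r.2 ∧ ∀ x ∈ Icc (r.1 : ℝ) (r.2 : ℝ), pt x y ∈ M}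

end Aux
section Main

lemma isClosed_Bad {M : Set Plane} (hM : IsCompact M) {c d : ℝ} (hcd : c ≤ d) :
    IsClosed (Bad M c d) := by
  refine IsSeqClosed.isClosed ?_
  intro F f hF hlim
  choose a ha using hF
  obtain ⟨R, hR⟩ := isBounded_iff_forall_norm_le.1 hM.isBounded
  have hc : c ∈ Icc c d := ⟨le_refl c, hcd⟩
  have heval : ∀ y : ℝ, Tendsto (fun n => F n y) atTop (𝓝 (f y)) := by
    intro y
    exact ((BoundedContinuousFunction.lipschitz_eval_const y).continuous.tendsto f).comp hlim
  obtain ⟨C, hC⟩ : ∃ C, ∀ n, |F n c| ≤ C := by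
    obtain ⟨C, hC⟩ := ((heval c).abs).bddAbove_range
    exact ⟨C, fun n => hC ⟨n, rfl⟩⟩
  have hbound : ∀ n, a n ∈ Icc (-(R + C)) (R + C) := by
    intro n
    have h1 : |a n - F n c| ≤ R := le_trans (abs_le_norm_pt _ c) (hR _ (ha n c hc))
    have h2 := hC n
    have h3 := abs_sub_abs_le_abs_sub (a n) (F n c)
    constructor <;> [skip; skip] <;>
      · have := abs_le.1 h1; have := abs_le.1 h2; have := le_abs_self (a n)
        have := neg_abs_le (a n); simp only [mem_Icc] at *
        nlinarith [abs_nonneg (a n - F n c)]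
  obtain ⟨α, -, φ, hφ, hα⟩ := tendsto_subseq_of_bounded (Metric.isBounded_Icc _ _) hbound
  refine ⟨α, fun y hy => ?_⟩
  have hz : Tendsto (fun k => pt (a (φ k) - F (φ k) y) y) atTop (𝓝 (pt (α - f y) y)) := by
    have h1 : Tendsto (fun k => (a (φ k) - F (φ k) y, y)) atTop (𝓝 (α - f y, y)) :=
      (hα.sub ((heval y).comp hφ.tendsto_atTop)).prodMk_nhds tendsto_const_nhds
    exact (continuous_pt.tendsto _).comp h1
  exact hM.isClosed.mem_of_tendsto hz (Filter.Eventually.of_forall fun k => ha (φ k) y hy)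

lemma isClosed_Yset {M : Set Plane} (hM : IsClosed M) (r : ℚ × ℚ) : IsClosed (Yset M r) := by
  by_cases h : r.1 < r.2
  · have : Yset M r = ⋂ x ∈ Icc (r.1 : ℝ) (r.2 : ℝ), {y : ℝ | pt x y ∈ M} := by
      ext y; simp [Yset, h]
    rw [this]
    refine isClosed_biInter fun x _ => ?_
    have hcont : Continuous fun y : ℝ => pt x y :=
      continuous_pt.comp (continuous_const.prodMk continuous_id)
    exact hM.preimage hcont
  · have : Yset M r = ∅ := by ext y; simp [Yset, h]
    rw [this]; exact isClosed_empty

lemma interior_Yset {M : Set Plane} (hnd : interior M = ∅) (r : ℚ × ℚ) :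
    interior (Yset M r) = ∅ := by
  by_contra h
  obtain ⟨y0, hy0⟩ := nonempty_iff_ne_empty.2 h
  obtain ⟨δ, hδ, hball⟩ := Metric.isOpen_iff.1 isOpen_interior y0 hy0
  have hsub : Metric.ball y0 δ ⊆ Yset M r := hball.trans interior_subset
  have hy0Y : y0 ∈ Yset M r := hsub (Metric.mem_ball_self hδ)
  obtain ⟨hrlt, -⟩ := hy0Y
  set U : Set Plane := {z | z 0 ∈ Ioo (r.1 : ℝ) (r.2 : ℝ) ∧ z 1 ∈ Metric.ball y0 δ}
  have hUopen : IsOpen U :=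
    (isOpen_Ioo.preimage (continuous_coord 0)).inter
      (Metric.isOpen_ball.preimage (continuous_coord 1))
  have hUM : U ⊆ M := by
    rintro z ⟨hz0, hz1⟩
    have := (hsub hz1).2 (z 0) (Ioo_subset_Icc_self hz0)
    rwa [pt_eta] at this
  have hUne : U.Nonempty := by
    refine ⟨pt (((r.1 : ℝ) + r.2) / 2) y0, ?_, ?_⟩
    · rw [pt_apply0]
      constructor <;> · linarith [(Rat.cast_lt (K := ℝ)).2 hrlt]
    · rw [pt_apply1]; exact Metric.mem_ball_self hδ
  have hsubint : U ⊆ interior M := interior_maximal hUM hUopen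
  rw [hnd] at hsubint
  exact absurd (hsubint hUne.choose_spec) (notMem_empty _)

lemma exists_ybar {M : Set Plane} (hM : IsClosed M) (hnd : interior M = ∅) {c d : ℝ}
    (hcd : c < d) :
    ∃ yb, yb ∈ Ioo c d ∧ ∀ r : ℚ × ℚ, yb ∉ Yset M r := by
  have hdense : Dense (⋂ r : ℚ × ℚ, (Yset M r)ᶜ) := by
    refine dense_iInter_of_isOpen (fun r => (isClosed_Yset hM r).isOpen_compl) (fun r => ?_)
    rw [← interior_eq_empty_iff_dense_compl]
    exact interior_Yset hnd r
  obtain ⟨yb, hyb1, hyb2⟩ := hdense.inter_open_nonempty (Ioo c d) isOpen_Ioo (nonempty_Ioo.2 hcd)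
  exact ⟨yb, hyb1, by simpa using hyb2⟩
lemma interior_Bad {M : Set Plane} (hM : IsCompact M) (hnd : interior M = ∅) {c d : ℝ}
    (hcd : c < d) : interior (Bad M c d) = ∅ := by
  rw [eq_empty_iff_forall_notMem]
  intro f hf
  obtain ⟨ρ, hρ, hball⟩ : ∃ ρ > 0, Metric.ball f ρ ⊆ Bad M c d :=
    Metric.mem_nhds_iff.1 (mem_interior_iff_mem_nhds.1 hf)
  obtain ⟨yb, hybIoo, hyb⟩ := exists_ybar hM.isClosed hnd hcd
  obtain ⟨hcyb, hybd⟩ := hybIoo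
  have hρ2 : (0:ℝ) < ρ / 2 := by linarith
  -- the perturbations
  set u : ℕ → BoundedContinuousFunction ℝ ℝ := fun n =>
    BoundedContinuousFunction.ofNormedAddCommGroup
      (fun y => (ρ/2) * Real.sin (((n:ℝ)+1) * y))
      (continuous_const.mul (Real.continuous_sin.comp (continuous_const.mul continuous_id)))
      (ρ/2)
      (fun y => by
        rw [Real.norm_eq_abs, abs_mul, abs_of_pos hρ2]
        nlinarith [Real.abs_sin_le_one (((n:ℝ)+1) * y), abs_nonneg (Real.sin (((n:ℝ)+1)*y))]) with hu
  have hu_apply : ∀ n y, u n y = (ρ/2) * Real.sin (((n:ℝ)+1) * y) := fun n y => rfl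
  have hmem : ∀ n, f + u n ∈ Bad M c d := by
    intro n
    apply hball
    rw [Metric.mem_ball, dist_eq_norm, add_sub_cancel_left]
    calc ‖u n‖ ≤ ρ/2 := BoundedContinuousFunction.norm_ofNormedAddCommGroup_le _ (le_of_lt hρ2) _
      _ < ρ := by linarith
  choose a ha using hmem
  obtain ⟨R, hR⟩ := isBounded_iff_forall_norm_le.1 hM.isBounded
  have hybIcc : yb ∈ Icc c d := ⟨le_of_lt hcyb, le_of_lt hybd⟩
  have hbound : ∀ n, a n ∈ Icc (-(R + (|f yb| + ρ/2))) (R + (|f yb| + ρ/2)) := by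
    intro n
    have h1 := hR _ (ha n yb hybIcc)
    have h2 : |a n - (f + u n) yb| ≤ R := le_trans (abs_le_norm_pt _ _) h1
    have h3 : |(f + u n) yb| ≤ |f yb| + ρ/2 := by
      rw [BoundedContinuousFunction.add_apply]
      refine le_trans (abs_add_le _ _) (add_le_add le_rfl ?_)
      rw [hu_apply, abs_mul, abs_of_pos hρ2]
      nlinarith [Real.abs_sin_le_one (((n:ℝ)+1) * yb), abs_nonneg (Real.sin (((n:ℝ)+1)*yb))]
    have := abs_le.1 h2; have := abs_le.1 h3
    constructor <;> · simp only [BoundedContinuousFunction.add_apply] at *; nlinarith [le_abs_self (f yb), neg_abs_le (f yb)]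
  obtain ⟨α, -, φ, hφ, hα⟩ := tendsto_subseq_of_bounded (Metric.isBounded_Icc _ _) hbound
  -- the key claim
  have claim : ∀ v ∈ Icc (-(ρ/2)) (ρ/2), pt (α - f yb - v) yb ∈ M := by
    intro v hv
    set w : ℝ := v / (ρ/2) with hw
    have hw1 : -1 ≤ w ∧ w ≤ 1 := by
      constructor
      · rw [hw, le_div_iff₀ hρ2]; nlinarith [hv.1]
      · rw [hw, div_le_one hρ2]; exact hv.2
    set s : ℝ := Real.arcsin w with hs
    have hsin : Real.sin s = w := Real.sin_arcsin hw1.1 hw1.2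
    have h2pi : (0:ℝ) < 2 * Real.pi := Real.two_pi_pos
    set N : ℕ → ℝ := fun k => (φ k : ℝ) + 1 with hN
    have hNpos : ∀ k, 0 < N k := fun k => by positivity
    have hYex : ∀ k, ∃ Yk : ℝ, yb ≤ Yk ∧ Yk < yb + 2 * Real.pi / N k ∧
        Real.sin (N k * Yk) = w := by
      intro k
      have hn := hNpos k
      set n : ℝ := N k
      set mk : ℤ := ⌈(n * yb - s) / (2 * Real.pi)⌉ with hmk
      set θ : ℝ := s + (mk : ℝ) * (2 * Real.pi) with hθ
      have hθ_ge : n * yb ≤ θ := by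
        have h1 := Int.le_ceil ((n * yb - s) / (2 * Real.pi))
        have h2 := (div_le_iff₀ h2pi).1 h1
        rw [← hmk] at h2
        rw [hθ]; linarith
      have hθ_lt : θ < n * yb + 2 * Real.pi := by
        have h1 := Int.ceil_lt_add_one ((n * yb - s) / (2 * Real.pi))
        have h2 := mul_lt_mul_of_pos_right h1 h2pi
        have h3 := div_mul_cancel₀ (n * yb - s) (ne_of_gt h2pi)
        rw [← hmk] at h2
        have h4 : ((n * yb - s) / (2 * Real.pi) + 1) * (2 * Real.pi) = n * yb - s + 2 * Real.pi := by
          rw [add_mul, h3, one_mul]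
        rw [h4] at h2
        rw [hθ]; linarith
      refine ⟨θ / n, ?_, ?_, ?_⟩
      · rw [le_div_iff₀ hn]; nlinarith
      · rw [div_lt_iff₀ hn]
        have hexp : (yb + 2 * Real.pi / n) * n = yb * n + 2 * Real.pi := by field_simp
        rw [hexp]
        nlinarith [mul_comm yb n]
      · rw [mul_div_cancel₀ _ (ne_of_gt hn), hθ, Real.sin_add_int_mul_two_pi, hsin]
    choose Y hY_ge hY_lt hsinY using hYex
    have huY : ∀ k, u (φ k) (Y k) = v := by
      intro k
      rw [hu_apply]
      have hNk : ((φ k : ℝ) + 1) = N k := rfl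
      rw [hNk, hsinY k, hw, mul_div_cancel₀ _ (ne_of_gt hρ2)]
    -- eventually Y k ∈ Icc c d
    obtain ⟨K, hK⟩ := exists_nat_gt (2 * Real.pi / (d - yb))
    have hev : ∀ k ≥ K, Y k ∈ Icc c d := by
      intro k hk
      refine ⟨le_trans (le_of_lt hcyb) (hY_ge k), ?_⟩
      have h0 : k ≤ φ k := hφ.le_apply
      have h1 : (K : ℝ) ≤ N k := by
        have : (K:ℝ) ≤ (φ k : ℝ) := by exact_mod_cast le_trans hk h0
        rw [hN]; simp only []; linarith
      have hdyb : 0 < d - yb := by linarith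
      have h2 : 2 * Real.pi / N k < d - yb := by
        rw [div_lt_iff₀ (hNpos k)]
        have h3 : 2 * Real.pi / (d - yb) < N k := lt_of_lt_of_le hK h1
        have h4 := (div_lt_iff₀ hdyb).1 h3
        nlinarith
      linarith [hY_lt k]
    -- tendsto Y → yb
    have hYtend : Tendsto Y atTop (𝓝 yb) := by
      have hub : Tendsto (fun k => yb + 2 * Real.pi / N k) atTop (𝓝 (yb + 0)) := by
        refine tendsto_const_nhds.add ?_
        have hNtend : Tendsto N atTop atTop := by
          apply tendsto_atTop_add_const_right
          exact tendsto_natCast_atTop_atTop.comp hφ.tendsto_atTop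
        exact (tendsto_const_nhds.div_atTop hNtend)
      rw [add_zero] at hub
      exact tendsto_of_tendsto_of_tendsto_of_le_of_le tendsto_const_nhds hub hY_ge (fun k => le_of_lt (hY_lt k))
    -- limit membership
    have hz : Tendsto (fun k => pt (a (φ k) - f (Y k) - v) (Y k)) atTop (𝓝 (pt (α - f yb - v) yb)) := by
      have hfY : Tendsto (fun k => f (Y k)) atTop (𝓝 (f yb)) :=
        (f.continuous.tendsto yb).comp hYtend
      have h1 : Tendsto (fun k => (a (φ k) - f (Y k) - v, Y k)) atTop (𝓝 (α - f yb - v, yb)) :=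
        ((hα.sub hfY).sub tendsto_const_nhds).prodMk_nhds hYtend
      exact (continuous_pt.tendsto _).comp h1
    refine hM.isClosed.mem_of_tendsto hz ?_
    rw [eventually_atTop]
    refine ⟨K, fun k hk => ?_⟩
    have := ha (φ k) (Y k) (hev k hk)
    rw [BoundedContinuousFunction.add_apply, huY k] at this
    have heq : a (φ k) - (f (Y k) + v) = a (φ k) - f (Y k) - v := by ring
    rwa [heq] at this
  -- derive contradiction
  set L : ℝ := α - f yb with hL
  obtain ⟨p, hp1, hp2⟩ := exists_rat_btwn (show L - ρ/2 < L by linarith)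
  obtain ⟨q, hq1, hq2⟩ := exists_rat_btwn (show (p:ℝ) < L + ρ/2 by linarith)
  have hpq : p < q := by exact_mod_cast hq1
  refine hyb (p, q) ⟨hpq, fun x hx => ?_⟩
  have hxv : L - x ∈ Icc (-(ρ/2)) (ρ/2) := by
    simp only [mem_Icc] at hx ⊢
    constructor <;> nlinarith [hx.1, hx.2]
  have := claim (L - x) hxv
  have heq : α - f yb - (L - x) = x := by rw [hL]; ring
  rwa [heq] at this

lemma exists_good {M : Set Plane} (hM : IsCompact M) (hnd : interior M = ∅) {ε : ℝ}
    (hε : 0 < ε) :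
    ∃ f : BoundedContinuousFunction ℝ ℝ, ‖f‖ < ε ∧
      ∀ p q : ℚ, (p : ℝ) < (q : ℝ) → f ∉ Bad M p q := by
  classical
  set G : ℚ × ℚ → Set (BoundedContinuousFunction ℝ ℝ) := fun r =>
    if (r.1 : ℝ) < (r.2 : ℝ) then (Bad M r.1 r.2)ᶜ else univ with hG
  have hGopen : ∀ r, IsOpen (G r) := by
    intro r
    rw [hG]
    by_cases h : (r.1 : ℝ) < (r.2 : ℝ)
    · simp only [if_pos h]
      exact (isClosed_Bad hM (le_of_lt h)).isOpen_compl
    · simp only [if_neg h]; exact isOpen_univ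
  have hGdense : ∀ r, Dense (G r) := by
    intro r
    rw [hG]
    by_cases h : (r.1 : ℝ) < (r.2 : ℝ)
    · simp only [if_pos h]
      rw [← interior_eq_empty_iff_dense_compl]
      exact interior_Bad hM hnd h
    · simp only [if_neg h]; exact dense_univ
  have hdense : Dense (⋂ r : ℚ × ℚ, G r) := dense_iInter_of_isOpen hGopen hGdense
  obtain ⟨f, hf1, hf2⟩ := hdense.inter_open_nonempty (Metric.ball 0 ε) Metric.isOpen_ball
    ⟨0, Metric.mem_ball_self hε⟩
  refine ⟨f, by simpa using hf1, fun p q hpq => ?_⟩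
  have := mem_iInter.1 hf2 (p, q)
  rw [hG] at this
  simp only [if_pos hpq] at this
  exact this

end Main

/-- A compact nowhere dense subset `M` of the plane can be moved by an
`ε`-homeomorphism of the plane so that the boundary of the image contains no
vertical segment of length at least `ε`. -/
theorem stmt_17 (M : Set Plane) (hM : IsCompact M) (hnd : interior M = ∅)
    (ε : ℝ) (hε : 0 < ε) :
    ∃ φ : Plane ≃ₜ Plane, (∀ x : Plane, dist (φ x) x < ε) ∧
      ∀ a c d : ℝ, ε ≤ d - c →
        ¬ ({p : Plane | p 0 = a ∧ p 1 ∈ Set.Icc c d} ⊆ frontier (φ '' M)) := by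
  obtain ⟨f, hfnorm, hfgood⟩ := exists_good hM hnd hε
  refine ⟨shear f, ?_, ?_⟩
  · intro x
    rw [dist_shear]
    calc |f (x 1)| ≤ ‖f‖ := f.norm_coe_le_norm (x 1)
      _ < ε := hfnorm
  · intro a c d hcd hsub
    have hcd' : c < d := by linarith
    have hmid1 : c < (c + d) / 2 := by linarith
    have hmid2 : (c + d) / 2 < d := by linarith
    obtain ⟨p, hp1, hp2⟩ := exists_rat_btwn hmid1
    obtain ⟨q, hq1, hq2⟩ := exists_rat_btwn hmid2
    have hpq : (p : ℝ) < (q : ℝ) := by linarith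
    have hnotbad := hfgood p q hpq
    rw [Bad, mem_setOf_eq] at hnotbad
    push_neg at hnotbad
    obtain ⟨y, hy, hyM⟩ := hnotbad a
    have hyIcc : y ∈ Icc c d := ⟨le_trans (le_of_lt hp1) hy.1, le_trans hy.2 (le_of_lt hq2)⟩
    have hseg : pt a y ∈ {p : Plane | p 0 = a ∧ p 1 ∈ Set.Icc c d} := by
      refine ⟨pt_apply0 a y, ?_⟩
      rw [pt_apply1]; exact hyIcc
    have hfr := hsub hseg
    have himg : pt a y ∈ (shear f) '' M := by
      have hclosed : IsClosed ((shear f) '' M) := (hM.image (shear f).continuous).isClosed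
      have := frontier_subset_closure hfr
      rwa [hclosed.closure_eq] at this
    obtain ⟨m, hm, hmeq⟩ := himg
    have : (shear f).symm (pt a y) = m := by rw [← hmeq, Homeomorph.symm_apply_apply]
    rw [shear_symm_pt] at this
    rw [← this] at hm
    exact hyM hm
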